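/- Let v : [0,1] → ℝ be continuously differentiable with v'(0) = 0 and v(1) = 0, and satisfy (τ v'(τ))' = -Ha²·τ·(1 - v(τ)/(1 - α v(τ))) on (0,1). If 1 - v(τ)/(1 - α v(τ)) ≤ 1 for all τ ∈ (0,1) (e.g. when 0 ≤ v < 1/α), then v(τ) ≤ (Ha²/4)·(1 - τ²) for all τ ∈ [0,1]. -/
import Mathlib

theorem stmt_8 (α Ha : ℝ) (v v' : ℝ → ℝ)
    (hd : ∀ τ, HasDerivAt v (v' τ) τ) (hv'c : Continuous v')
    (hbc0 : v' 0 = 0) (hbc1 : v 1 = 0)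
    (heq : ∀ τ ∈ Set.Ioo (0 : ℝ) 1,
      HasDerivAt (fun s => s * v' s) (-Ha ^ 2 * τ * (1 - v τ / (1 - α * v τ))) τ)
    (hbnd : ∀ τ ∈ Set.Ioo (0 : ℝ) 1, 1 - v τ / (1 - α * v τ) ≤ 1) :
    ∀ τ ∈ Set.Icc (0 : ℝ) 1, v τ ≤ Ha ^ 2 / 4 * (1 - τ ^ 2) := by
  -- Step 1: g τ = τ v' τ + Ha² τ²/2 is monotone on [0,1]
  set g : ℝ → ℝ := fun τ => τ * v' τ + Ha ^ 2 * τ ^ 2 / 2 with hg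
  have hgc : Continuous g := by
    apply Continuous.add
    · exact continuous_id.mul hv'c
    · continuity
  have hgderiv : ∀ τ ∈ Set.Ioo (0 : ℝ) 1,
      HasDerivAt g (-Ha ^ 2 * τ * (1 - v τ / (1 - α * v τ)) + Ha ^ 2 * τ) τ := by
    intro τ hτ
    have h1 := heq τ hτ
    have h2 : HasDerivAt (fun s : ℝ => Ha ^ 2 * s ^ 2 / 2) (Ha ^ 2 * τ) τ := by
      have : HasDerivAt (fun s : ℝ => Ha ^ 2 * s ^ 2 / 2)
          (Ha ^ 2 * (2 * τ ^ 1) / 2) τ := by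
        exact ((hasDerivAt_pow 2 τ).const_mul (Ha ^ 2)).div_const 2
      convert this using 1
      ring
    exact h1.add h2
  have hgmono : MonotoneOn g (Set.Icc (0 : ℝ) 1) := by
    apply monotoneOn_of_deriv_nonneg (convex_Icc 0 1) hgc.continuousOn
    · intro x hx
      rw [interior_Icc] at hx
      exact (hgderiv x hx).differentiableAt.differentiableWithinAt
    · intro x hx
      rw [interior_Icc] at hx
      rw [(hgderiv x hx).deriv]
      have hb := hbnd x hx
      have hx0 := hx.1
      nlinarith [sq_nonneg Ha, mul_nonneg (sq_nonneg Ha) hx0.le]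
  have hkey : ∀ τ ∈ Set.Icc (0 : ℝ) 1, -Ha ^ 2 * τ ^ 2 / 2 ≤ τ * v' τ := by
    intro τ hτ
    have h0 : (0 : ℝ) ∈ Set.Icc (0 : ℝ) 1 := by constructor <;> norm_num
    have := hgmono h0 hτ hτ.1
    simp only [hg, hbc0] at this
    nlinarith [this]
  -- Step 2: h τ = v τ + Ha²/4 τ² is monotone on [0,1]
  set h : ℝ → ℝ := fun τ => v τ + Ha ^ 2 / 4 * τ ^ 2 with hh
  have hhmono : MonotoneOn h (Set.Icc (0 : ℝ) 1) := by
    apply monotoneOn_of_deriv_nonneg (convex_Icc 0 1)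
    · apply Continuous.continuousOn
      apply Continuous.add
      · exact (continuous_iff_continuousAt.mpr fun x => (hd x).continuousAt)
      · continuity
    · intro x hx
      exact (((hd x).add ((hasDerivAt_pow 2 x).const_mul
        (Ha ^ 2 / 4))).differentiableAt).differentiableWithinAt
    · intro x hx
      rw [interior_Icc] at hx
      have hder : HasDerivAt h (v' x + Ha ^ 2 / 4 * (2 * x ^ 1)) x :=
        (hd x).add ((hasDerivAt_pow 2 x).const_mul (Ha ^ 2 / 4))
      rw [hder.deriv]
      have := hkey x ⟨hx.1.le, hx.2.le⟩
      have hx0 : 0 < x := hx.1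
      nlinarith [this]
  intro τ hτ
  have h1 : (1 : ℝ) ∈ Set.Icc (0 : ℝ) 1 := by constructor <;> norm_num
  have := hhmono hτ h1 hτ.2
  simp only [hh, hbc1] at this
  nlinarith [this]
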